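/- Let p be an odd prime and let q be a prime with q ≠ p. Then the abelian group H¹(Γ₂(p); M ⊕ M*) has no q-torsion: if x ∈ H¹(Γ₂(p); M ⊕ M*) satisfies q·x = 0, then x = 0. -/

import Mathlib

open Matrix CongruenceSubgroup

/-- The monoid homomorphism from linear automorphisms to linear endomorphisms. -/
def linEquivToEnd {R M : Type*} [CommRing R] [AddCommGroup M] [Module R M] :
    (M ≃ₗ[R] M) →* (M →ₗ[R] M) where
  toFun e := e.toLinearMap
  map_one' := rfl
  map_mul' _ _ := rfl

/-- `A ↦ (Aᵀ)⁻¹ = (A⁻¹)ᵀ` as an endomorphism of `SL(n,R)`. -/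
def dualSL {n : Type*} [DecidableEq n] [Fintype n] {R : Type*} [CommRing R] :
    Matrix.SpecialLinearGroup n R →* Matrix.SpecialLinearGroup n R where
  toFun A := (A⁻¹).transpose
  map_one' := by
    apply Subtype.ext
    simp [Matrix.SpecialLinearGroup.transpose]
  map_mul' A B := by
    apply Subtype.ext
    simp [Matrix.SpecialLinearGroup.transpose, Matrix.transpose_mul, _root_.mul_inv_rev]
    rfl

/-- The standard representation `M` of `Γ₂(p)` on `ℤ²`:  `A` acts by `v ↦ A·v`. -/
noncomputable def repM (p : ℕ) : Representation ℤ (Gamma p) (Fin 2 → ℤ) :=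
  (linEquivToEnd.comp Matrix.SpecialLinearGroup.toLin').comp (Gamma p).subtype

/-- The dual representation `M*` of `Γ₂(p)` on `ℤ²`:  `A` acts by `v ↦ (Aᵀ)⁻¹·v`. -/
noncomputable def repMdual (p : ℕ) : Representation ℤ (Gamma p) (Fin 2 → ℤ) :=
  ((linEquivToEnd.comp Matrix.SpecialLinearGroup.toLin').comp dualSL).comp (Gamma p).subtype

/-- The direct sum `M ⊕ M*` as a representation of `Γ₂(p)` on `ℤ⁴`. -/
noncomputable def repSum (p : ℕ) :
    Representation ℤ (Gamma p) ((Fin 2 → ℤ) × (Fin 2 → ℤ)) :=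
  ((LinearMap.prodMapRingHom ℤ _ _).toMonoidHom).comp (MonoidHom.prod (repM p) (repMdual p))

lemma repSum_apply (p : ℕ) (g : Gamma p) (v : (Fin 2 → ℤ) × (Fin 2 → ℤ)) :
    repSum p g v = ((g.1.1).mulVec v.1, ((g.1⁻¹).1)ᵀ.mulVec v.2) := by
  change (Matrix.SpecialLinearGroup.toLin' g.1 v.1,
    Matrix.SpecialLinearGroup.toLin' ((g.1⁻¹).transpose) v.2) = _
  rw [Matrix.SpecialLinearGroup.toLin'_apply, Matrix.SpecialLinearGroup.toLin'_apply,
    Matrix.toLin'_apply, Matrix.toLin'_apply]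
  rfl

/-- The upper triangular element of `Γ(p)`. -/
def gammaU (p : ℕ) : Gamma p :=
  ⟨⟨!![1, (p : ℤ); 0, 1], by simp [Matrix.det_fin_two_of]⟩, by
    refine Gamma_mem.mpr ⟨by simp, by simp, by simp, by simp⟩⟩

/-- The lower triangular element of `Γ(p)`. -/
def gammaL (p : ℕ) : Gamma p :=
  ⟨⟨!![1, 0; (p : ℤ), 1], by simp [Matrix.det_fin_two_of]⟩, by
    refine Gamma_mem.mpr ⟨by simp, by simp, by simp, by simp⟩⟩

lemma gammaU_inv_T (p : ℕ) : (((gammaU p).1⁻¹).1)ᵀ = !![1, 0; -(p:ℤ), 1] := by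
  rw [Matrix.SpecialLinearGroup.coe_inv]
  ext i j
  fin_cases i <;> fin_cases j <;>
    simp [gammaU, Matrix.adjugate_fin_two]

lemma gammaL_inv_T (p : ℕ) : (((gammaL p).1⁻¹).1)ᵀ = !![1, -(p:ℤ); 0, 1] := by
  rw [Matrix.SpecialLinearGroup.coe_inv]
  ext i j
  fin_cases i <;> fin_cases j <;>
    simp [gammaL, Matrix.adjugate_fin_two]


/-- for an odd prime `p` and a prime `q ≠ p`, the abelian group
`H¹(Γ₂(p); M ⊕ M*)` has no `q`-torsion. -/
theorem stmt7 (p q : ℕ) (hp : p.Prime) (hodd : Odd p) (hq : q.Prime) (hqp : q ≠ p)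
    (x : groupCohomology (Rep.of (repSum p)) 1) (hx : q • x = 0) : x = 0 := by
  classical
  have hqZ : Prime (q : ℤ) := Nat.prime_iff_prime_int.mp hq
  have hqdp : ∀ a : ℤ, (q : ℤ) ∣ (p : ℤ) * a → (q : ℤ) ∣ a := by
    intro a ha
    rcases hqZ.dvd_mul.mp ha with h | h
    · exfalso
      exact hqp ((Nat.prime_dvd_prime_iff_eq hq hp).mp (Int.natCast_dvd_natCast.mp h))
    · exact h
  revert hx
  refine groupCohomology.H1_induction_on x (fun f => ?_)
  intro hx
  rw [groupCohomology.H1π_eq_zero_iff]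
  have hqf : (q : ℤ) • ⇑f ∈ groupCohomology.coboundaries₁ (Rep.of (repSum p)) := by
    have h1 : groupCohomology.H1π (Rep.of (repSum p)) ((q : ℤ) • f) = 0 := by
      rw [map_zsmul, natCast_zsmul]; exact hx
    exact (groupCohomology.H1π_eq_zero_iff _).mp h1
  obtain ⟨v, hv⟩ := hqf
  let v' : (Fin 2 → ℤ) × (Fin 2 → ℤ) := v
  have hv' : ∀ g : Gamma p, repSum p g v' - v' = (q : ℤ) • (f g) := by
    intro g
    have := congrFun hv g
    rw [groupCohomology.d₀₁_hom_apply] at this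
    exact this
  have hU := hv' (gammaU p)
  have hL := hv' (gammaL p)
  rw [repSum_apply, gammaU_inv_T] at hU
  rw [repSum_apply, gammaL_inv_T] at hL
  have hU1 := congrFun (congrArg Prod.fst hU) 0
  have hL1 := congrFun (congrArg Prod.fst hL) 1
  have hU2 := congrFun (congrArg Prod.snd hU) 1
  have hL2 := congrFun (congrArg Prod.snd hL) 0
  simp [gammaU, gammaL, Matrix.mulVec, dotProduct, Fin.sum_univ_two] at hU1 hL1 hU2 hL2
  obtain ⟨a1, ha1⟩ : (q : ℤ) ∣ v'.1 1 := hqdp _ ⟨_, hU1⟩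
  obtain ⟨a0, ha0⟩ : (q : ℤ) ∣ v'.1 0 := hqdp _ ⟨_, hL1⟩
  obtain ⟨b0, hb0⟩ : (q : ℤ) ∣ v'.2 0 :=
    hqdp _ (dvd_neg.mp ⟨_, hU2⟩)
  obtain ⟨b1, hb1⟩ : (q : ℤ) ∣ v'.2 1 :=
    hqdp _ (dvd_neg.mp ⟨_, hL2⟩)
  clear hU hL hU1 hL1 hU2 hL2 hv hx
  let w : (Fin 2 → ℤ) × (Fin 2 → ℤ) := (![a0, a1], ![b0, b1])
  have hw1 : v'.1 = (q : ℤ) • ![a0, a1] := by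
    funext i
    fin_cases i
    · simpa using ha0
    · simpa using ha1
  have hw2 : v'.2 = (q : ℤ) • ![b0, b1] := by
    funext i
    fin_cases i
    · simpa using hb0
    · simpa using hb1
  have hw : v' = (q : ℤ) • w := Prod.ext hw1 hw2
  refine ⟨w, funext fun g => ?_⟩
  rw [groupCohomology.d₀₁_hom_apply]
  have hg := hv' g
  rw [hw, _root_.map_smul, ← smul_sub] at hg
  exact smul_right_injective ((Fin 2 → ℤ) × (Fin 2 → ℤ)) hqZ.ne_zero hg
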